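/- Lipschitz property with constant 1 for the matching LP: Fix d, n ∈ ℕ, rewards r ∈ ℝ₊^{d×n}, an adjacency matrix a ∈ {0,1}^{d×n}, and b ∈ ℝ₊^d. For z ∈ ℝ₊ⁿ let P[z, b] be the LP: maximize Σ_{i∈[d], j∈[n]} x_ij r_ij a_ij subject to Σ_{j∈[n]} x_ij ≤ b_i for all i ∈ [d], Σ_{i∈[d]} x_ij ≤ z_j for all j ∈ [n], and x ≥ 0. Then for any z¹, z² ∈ ℝ₊ⁿ and any optimal solution x¹ of P[z¹, b], there exists an optimal solution x² of P[z², b] such that ‖x¹ − x²‖_∞ ≤ ‖z¹ − z²‖₁. -/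
import Mathlib


open Finset

section MLPAuxiliary


lemma exists_fcycle {V : Type*} [Fintype V] [DecidableEq V] (A : V → V → Prop)
    (hA : ∀ v, (∃ u, A u v) → ∃ w, A v w) {v₀ w₀ : V} (h₀ : A v₀ w₀) :
    ∃ (S : Finset V) (f : V → V), S.Nonempty ∧ (∀ v ∈ S, f v ∈ S) ∧
      (∀ v ∈ S, A v (f v)) ∧ Set.InjOn f (S : Set V) := by
  classical
  set g : V → V := fun v => if h : ∃ w, A v w then h.choose else v with hg
  have hgA : ∀ v, (∃ w, A v w) → A v (g v) := by
    intro v h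
    simp only [hg, dif_pos h]
    exact h.choose_spec
  set u : ℕ → V := fun k => g^[k] w₀ with hu
  have husucc : ∀ k, u (k+1) = g (u k) := by
    intro k
    simp only [hu]
    exact Function.iterate_succ_apply' g k w₀
  have hin : ∀ k, ∃ p, A p (u k) := by
    intro k
    induction k with
    | zero => exact ⟨v₀, h₀⟩
    | succ m ih =>
      refine ⟨u m, ?_⟩
      rw [husucc]
      exact hgA _ (hA _ ih)
  have harc : ∀ k, A (u k) (u (k+1)) := by
    intro k; rw [husucc]; exact hgA _ (hA _ (hin k))
  have hrep : ∃ m, ∃ a, a < m ∧ u a = u m := by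
    obtain ⟨i, j, hne, heq⟩ :=
      Fintype.exists_ne_map_eq_of_card_lt (fun i : Fin (Fintype.card V + 1) => u i) (by simp)
    rcases lt_or_gt_of_ne (fun h : (i:ℕ) = (j:ℕ) => hne (Fin.ext h)) with h | h
    · exact ⟨j, i, h, heq⟩
    · exact ⟨i, j, h, heq.symm⟩
  set m := Nat.find hrep with hm
  obtain ⟨a, ham, hua⟩ := Nat.find_spec hrep
  have hinj : ∀ k l, k < l → l < m → u k ≠ u l := by
    intro k l hkl hlm hequ
    exact Nat.find_min hrep hlm ⟨k, hkl, hequ⟩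
  refine ⟨(Finset.Ico a m).image u, g, ?_, ?_, ?_, ?_⟩
  · exact ⟨u a, Finset.mem_image_of_mem u (Finset.mem_Ico.2 ⟨le_refl a, ham⟩)⟩
  · intro v hv
    obtain ⟨k, hk, rfl⟩ := Finset.mem_image.1 hv
    rw [Finset.mem_Ico] at hk
    rw [← husucc]
    rcases eq_or_lt_of_le (Nat.succ_le_of_lt hk.2) with h | h
    · rw [Nat.succ_eq_add_one] at h
      rw [h, ← hua]
      exact Finset.mem_image_of_mem u (Finset.mem_Ico.2 ⟨le_refl a, ham⟩)
    · exact Finset.mem_image_of_mem u (Finset.mem_Ico.2 ⟨le_trans hk.1 (Nat.le_succ k), h⟩)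
  · intro v hv
    obtain ⟨k, hk, rfl⟩ := Finset.mem_image.1 hv
    exact hgA _ (hA _ (hin k))
  · intro v hv w hw hequ
    simp only [Finset.coe_image, Set.mem_image, Finset.mem_coe] at hv hw
    obtain ⟨k, hk, rfl⟩ := hv
    obtain ⟨l, hl, rfl⟩ := hw
    rw [Finset.mem_Ico] at hk hl
    rw [← husucc, ← husucc] at hequ
    -- wlog k ≤ l
    have key : ∀ k l, a ≤ k → k < m → a ≤ l → l < m → k < l → u (k+1) = u (l+1) → False := by
      intro k l hak hkm hal hlm hkl he
      rcases eq_or_lt_of_le (Nat.succ_le_of_lt hlm) with h | h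
      · rw [Nat.succ_eq_add_one] at h
        rw [h, ← hua] at he
        have : k + 1 < m := by omega
        exact hinj a (k+1) (by omega) this he.symm
      · exact hinj (k+1) (l+1) (by omega) h he
    rcases lt_trichotomy k l with h | h | h
    · exact absurd hequ (fun he => key k l hk.1 hk.2 hl.1 hl.2 h he)
    · rw [h]
    · exact absurd hequ.symm (fun he => key l k hl.1 hl.2 hk.1 hk.2 h he)


section Helpers

variable {α : Type*} [Fintype α]

lemma exists_pos_of_sum_pos {f : α → ℝ} (h : 0 < ∑ x, f x) : ∃ x, 0 < f x := by
  by_contra hc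
  push_neg at hc
  exact absurd (Finset.sum_nonpos (fun x _ => hc x)) (not_le.2 h)

lemma exists_neg_of_sum_neg {f : α → ℝ} (h : ∑ x, f x < 0) : ∃ x, f x < 0 := by
  by_contra hc
  push_neg at hc
  exact absurd (Finset.sum_nonneg (fun x _ => hc x)) (not_le.2 h)

lemma sum_neg_of_all_nonpos_neg {f : α → ℝ} {x₀ : α} (hx : f x₀ < 0)
    (h : ∀ x, f x ≤ 0) : ∑ x, f x < 0 := by
  classical
  have h1 : ∑ x, f x ≤ ∑ x, (if x = x₀ then f x₀ else 0) := by
    apply Finset.sum_le_sum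
    intro i _
    by_cases hi : i = x₀
    · simp [hi]
    · simp [hi, h i]
  simp only [Finset.sum_ite_eq', Finset.mem_univ, if_true] at h1
  linarith

lemma sum_pos_of_all_nonneg_pos {f : α → ℝ} {x₀ : α} (hx : 0 < f x₀)
    (h : ∀ x, 0 ≤ f x) : 0 < ∑ x, f x := by
  have h1 : f x₀ ≤ ∑ x, f x :=
    Finset.single_le_sum (f := f) (fun i _ => h i) (Finset.mem_univ x₀)
  linarith

end Helpers

namespace MLP

variable {d n : ℕ}

noncomputable def Rs (y : Fin d → Fin n → ℝ) (i : Fin d) : ℝ := ∑ j, y i j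
noncomputable def Cs (y : Fin d → Fin n → ℝ) (j : Fin n) : ℝ := ∑ i, y i j

lemma sum_Rs_eq_sum_Cs (y : Fin d → Fin n → ℝ) : ∑ i, Rs y i = ∑ j, Cs y j := by
  simp only [Rs, Cs]
  exact Finset.sum_comm

/-- conformal unit circulation relative to `y` -/
def Conf (y χ : Fin d → Fin n → ℝ) : Prop :=
  (∀ i j, χ i j = 0 ∨ (χ i j = 1 ∧ 0 < y i j) ∨ (χ i j = -1 ∧ y i j < 0)) ∧
  (∀ i, Rs χ i = 0 ∨ (Rs χ i = 1 ∧ 0 < Rs y i) ∨ (Rs χ i = -1 ∧ Rs y i < 0)) ∧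
  (∀ j, Cs χ j = 0 ∨ (Cs χ j = 1 ∧ 0 < Cs y j) ∨ (Cs χ j = -1 ∧ Cs y j < 0))

/-- arcs of the auxiliary digraph -/
def Arc (y : Fin d → Fin n → ℝ) : Option (Fin d ⊕ Fin n) → Option (Fin d ⊕ Fin n) → Prop
  | some (Sum.inl i), some (Sum.inr j) => 0 < y i j
  | some (Sum.inr j), some (Sum.inl i) => y i j < 0
  | some (Sum.inr j), none => 0 < Cs y j
  | none, some (Sum.inr j) => Cs y j < 0
  | some (Sum.inl i), none => Rs y i < 0
  | none, some (Sum.inl i) => 0 < Rs y i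
  | _, _ => False

lemma arc_flows (y : Fin d → Fin n → ℝ) :
    ∀ v, (∃ u, Arc y u v) → ∃ w, Arc y v w := by
  rintro (_ | (i | j)) ⟨u, hu⟩ <;> by_contra hno <;> push_neg at hno
  · -- v = none
    have hcol : ∀ j, 0 ≤ Cs y j := by
      intro j
      have := hno (some (Sum.inr j)); simpa [Arc, not_lt] using this
    have hrow : ∀ i, Rs y i ≤ 0 := by
      intro i
      have := hno (some (Sum.inl i)); simpa [Arc, not_lt] using this
    rcases u with _ | (i | j)
    · exact hu.elim
    · have hu' : Rs y i < 0 := hu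
      have h1 : ∑ i', Rs y i' < 0 := sum_neg_of_all_nonpos_neg hu' hrow
      have h2 : (0:ℝ) ≤ ∑ j', Cs y j' := Finset.sum_nonneg (fun j' _ => hcol j')
      rw [sum_Rs_eq_sum_Cs] at h1; linarith
    · have hu' : 0 < Cs y j := hu
      have h1 : 0 < ∑ j', Cs y j' := sum_pos_of_all_nonneg_pos hu' hcol
      have h2 : ∑ i', Rs y i' ≤ 0 := Finset.sum_nonpos (fun i' _ => hrow i')
      rw [sum_Rs_eq_sum_Cs] at h2; linarith
  · -- v = some (inl i) : a row; in-arcs: from col j (y i j < 0) or from none (0 < Rs y i)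
    have hcol : ∀ j, ¬ (0 < y i j) := by
      intro j
      have := hno (some (Sum.inr j)); simpa [Arc] using this
    have hnone : ¬ (Rs y i < 0) := by
      have := hno none; simpa [Arc] using this
    push_neg at hcol hnone
    -- so all y i j ≤ 0 and Rs y i ≥ 0, hence y i j = 0 ∀ j and Rs y i = 0
    rcases u with _ | (i' | j')
    · have hu' : 0 < Rs y i := hu
      have : Rs y i ≤ 0 := Finset.sum_nonpos (fun j' _ => hcol j')
      linarith
    · exact hu.elim
    · have hu' : y i j' < 0 := hu
      have h1 : Rs y i < 0 := sum_neg_of_all_nonpos_neg hu' hcol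
      linarith
  · -- v = some (inr j) : a column; in-arcs: from row i (0 < y i j) or from none (Cs y j < 0)
    have hrow : ∀ i, ¬ (y i j < 0) := by
      intro i
      have := hno (some (Sum.inl i)); simpa [Arc] using this
    have hnone : ¬ (0 < Cs y j) := by
      have := hno none; simpa [Arc] using this
    push_neg at hrow hnone
    rcases u with _ | (i' | j')
    · have hu' : Cs y j < 0 := hu
      have : 0 ≤ Cs y j := Finset.sum_nonneg (fun i' _ => hrow i')
      linarith
    · have hu' : 0 < y i' j := hu
      have h1 : 0 < Cs y j := sum_pos_of_all_nonneg_pos hu' hrow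
      linarith
    · exact hu.elim



lemma extract (y : Fin d → Fin n → ℝ) (hy : ∃ i j, y i j ≠ 0) :
    ∃ χ : Fin d → Fin n → ℝ, Conf y χ ∧ (∃ i j, χ i j ≠ 0) := by
  classical
  obtain ⟨i₀, j₀, hy0⟩ := hy
  -- a starting arc
  have hstart : ∃ v₀ w₀, Arc y v₀ w₀ := by
    rcases lt_or_gt_of_ne hy0 with h | h
    · exact ⟨some (Sum.inr j₀), some (Sum.inl i₀), h⟩
    · exact ⟨some (Sum.inl i₀), some (Sum.inr j₀), h⟩
  obtain ⟨v₀, w₀, h₀⟩ := hstart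
  obtain ⟨S, f, hne, hmaps, harcs, hinj⟩ := exists_fcycle (Arc y) (arc_flows y) h₀
  have himg : Finset.image f S = S := by
    apply Finset.eq_of_subset_of_card_le
    · intro v hv
      obtain ⟨u, hu, rfl⟩ := Finset.mem_image.1 hv
      exact hmaps u hu
    · rw [Finset.card_image_of_injOn hinj]
  have hpred : ∀ v ∈ S, ∃ u ∈ S, f u = v := by
    intro v hv
    rw [← himg] at hv
    obtain ⟨u, hu, he⟩ := Finset.mem_image.1 hv
    exact ⟨u, hu, he⟩
  set ri : Fin d → Option (Fin d ⊕ Fin n) := fun i => some (Sum.inl i) with hri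
  set cj : Fin n → Option (Fin d ⊕ Fin n) := fun j => some (Sum.inr j) with hcj
  set χ : Fin d → Fin n → ℝ := fun i j =>
    (if ri i ∈ S ∧ f (ri i) = cj j then (1:ℝ) else 0) -
    (if cj j ∈ S ∧ f (cj j) = ri i then (1:ℝ) else 0) with hχ
  -- both conditions cannot hold simultaneously
  have hboth : ∀ i j, ¬((ri i ∈ S ∧ f (ri i) = cj j) ∧ (cj j ∈ S ∧ f (cj j) = ri i)) := by
    rintro i j ⟨⟨h1, h2⟩, ⟨h3, h4⟩⟩
    have a1 := harcs _ h1; rw [h2] at a1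
    have a2 := harcs _ h3; rw [h4] at a2
    have b1 : 0 < y i j := a1
    have b2 : y i j < 0 := a2
    linarith
  -- entry trichotomy
  have hentry : ∀ i j, χ i j = 0 ∨ (χ i j = 1 ∧ 0 < y i j) ∨ (χ i j = -1 ∧ y i j < 0) := by
    intro i j
    by_cases h1 : ri i ∈ S ∧ f (ri i) = cj j
    · have h2 : ¬(cj j ∈ S ∧ f (cj j) = ri i) := fun h2 => hboth i j ⟨h1, h2⟩
      have a1 := harcs _ h1.1; rw [h1.2] at a1
      exact Or.inr (Or.inl ⟨by simp [hχ, h1, h2], a1⟩)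
    · by_cases h2 : cj j ∈ S ∧ f (cj j) = ri i
      · have a2 := harcs _ h2.1; rw [h2.2] at a2
        exact Or.inr (Or.inr ⟨by simp [hχ, h1, h2], a2⟩)
      · exact Or.inl (by simp [hχ, h1, h2])
  -- row sums
  have hrowsum : ∀ i, Rs χ i =
      (if ri i ∈ S ∧ (∃ j₁, f (ri i) = cj j₁) then (1:ℝ) else 0) -
      (if ∃ j₁, cj j₁ ∈ S ∧ f (cj j₁) = ri i then (1:ℝ) else 0) := by
    intro i
    have hA : ∑ j, (if ri i ∈ S ∧ f (ri i) = cj j then (1:ℝ) else 0) =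
        (if ri i ∈ S ∧ (∃ j₁, f (ri i) = cj j₁) then (1:ℝ) else 0) := by
      by_cases hm : ri i ∈ S ∧ ∃ j₁, f (ri i) = cj j₁
      · obtain ⟨hmem, j₁, hf⟩ := hm
        rw [if_pos ⟨hmem, j₁, hf⟩]
        have : ∀ j, (if ri i ∈ S ∧ f (ri i) = cj j then (1:ℝ) else 0) =
            (if j = j₁ then (1:ℝ) else 0) := by
          intro j
          by_cases hj : j = j₁
          · subst hj; rw [if_pos ⟨hmem, hf⟩, if_pos rfl]
          · rw [if_neg, if_neg hj]
            rintro ⟨-, hf2⟩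
            rw [hf] at hf2
            exact hj (by simpa [hcj] using hf2.symm)
        rw [Finset.sum_congr rfl (fun j _ => this j)]
        simp
      · rw [if_neg hm]
        apply Finset.sum_eq_zero
        intro j _
        rw [if_neg]
        rintro ⟨hmem, hf⟩
        exact hm ⟨hmem, j, hf⟩
    have hB : ∑ j, (if cj j ∈ S ∧ f (cj j) = ri i then (1:ℝ) else 0) =
        (if ∃ j₁, cj j₁ ∈ S ∧ f (cj j₁) = ri i then (1:ℝ) else 0) := by
      by_cases hm : ∃ j₁, cj j₁ ∈ S ∧ f (cj j₁) = ri i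
      · obtain ⟨j₁, hmem, hf⟩ := hm
        rw [if_pos ⟨j₁, hmem, hf⟩]
        have : ∀ j, (if cj j ∈ S ∧ f (cj j) = ri i then (1:ℝ) else 0) =
            (if j = j₁ then (1:ℝ) else 0) := by
          intro j
          by_cases hj : j = j₁
          · subst hj; rw [if_pos ⟨hmem, hf⟩, if_pos rfl]
          · rw [if_neg, if_neg hj]
            rintro ⟨hmem2, hf2⟩
            have : cj j = cj j₁ := hinj (by exact_mod_cast hmem2) (by exact_mod_cast hmem)
              (by rw [hf2, hf])
            exact hj (by simpa [hcj] using this)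
        rw [Finset.sum_congr rfl (fun j _ => this j)]
        simp
      · rw [if_neg hm]
        apply Finset.sum_eq_zero
        intro j _
        rw [if_neg]
        intro hcond
        exact hm ⟨j, hcond⟩
    simp only [Rs, hχ, Finset.sum_sub_distrib, hA, hB]
  -- column sums
  have hcolsum : ∀ j, Cs χ j =
      (if ∃ i₁, ri i₁ ∈ S ∧ f (ri i₁) = cj j then (1:ℝ) else 0) -
      (if cj j ∈ S ∧ (∃ i₁, f (cj j) = ri i₁) then (1:ℝ) else 0) := by
    intro j
    have hA : ∑ i, (if ri i ∈ S ∧ f (ri i) = cj j then (1:ℝ) else 0) =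
        (if ∃ i₁, ri i₁ ∈ S ∧ f (ri i₁) = cj j then (1:ℝ) else 0) := by
      by_cases hm : ∃ i₁, ri i₁ ∈ S ∧ f (ri i₁) = cj j
      · obtain ⟨i₁, hmem, hf⟩ := hm
        rw [if_pos ⟨i₁, hmem, hf⟩]
        have : ∀ i, (if ri i ∈ S ∧ f (ri i) = cj j then (1:ℝ) else 0) =
            (if i = i₁ then (1:ℝ) else 0) := by
          intro i
          by_cases hi : i = i₁
          · subst hi; rw [if_pos ⟨hmem, hf⟩, if_pos rfl]
          · rw [if_neg, if_neg hi]
            rintro ⟨hmem2, hf2⟩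
            have : ri i = ri i₁ := hinj (by exact_mod_cast hmem2) (by exact_mod_cast hmem)
              (by rw [hf2, hf])
            exact hi (by simpa [hri] using this)
        rw [Finset.sum_congr rfl (fun i _ => this i)]
        simp
      · rw [if_neg hm]
        apply Finset.sum_eq_zero
        intro i _
        rw [if_neg]
        intro hcond
        exact hm ⟨i, hcond⟩
    have hB : ∑ i, (if cj j ∈ S ∧ f (cj j) = ri i then (1:ℝ) else 0) =
        (if cj j ∈ S ∧ (∃ i₁, f (cj j) = ri i₁) then (1:ℝ) else 0) := by
      by_cases hm : cj j ∈ S ∧ ∃ i₁, f (cj j) = ri i₁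
      · obtain ⟨hmem, i₁, hf⟩ := hm
        rw [if_pos ⟨hmem, i₁, hf⟩]
        have : ∀ i, (if cj j ∈ S ∧ f (cj j) = ri i then (1:ℝ) else 0) =
            (if i = i₁ then (1:ℝ) else 0) := by
          intro i
          by_cases hi : i = i₁
          · subst hi; rw [if_pos ⟨hmem, hf⟩, if_pos rfl]
          · rw [if_neg, if_neg hi]
            rintro ⟨-, hf2⟩
            rw [hf] at hf2
            exact hi (by simpa [hri] using hf2.symm)
        rw [Finset.sum_congr rfl (fun i _ => this i)]
        simp
      · rw [if_neg hm]
        apply Finset.sum_eq_zero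
        intro i _
        rw [if_neg]
        rintro ⟨hmem, hf⟩
        exact hm ⟨hmem, i, hf⟩
    simp only [Cs, hχ, Finset.sum_sub_distrib, hA, hB]
  -- row trichotomy
  have hrow : ∀ i, Rs χ i = 0 ∨ (Rs χ i = 1 ∧ 0 < Rs y i) ∨ (Rs χ i = -1 ∧ Rs y i < 0) := by
    intro i
    rw [hrowsum i]
    by_cases hA : ri i ∈ S ∧ (∃ j₁, f (ri i) = cj j₁)
    · by_cases hB : ∃ j₁, cj j₁ ∈ S ∧ f (cj j₁) = ri i
      · rw [if_pos hA, if_pos hB]; exact Or.inl (by ring)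
      · rw [if_pos hA, if_neg hB]
        refine Or.inr (Or.inl ⟨by ring, ?_⟩)
        -- predecessor of ri i must be `none`
        obtain ⟨u, hu, hfu⟩ := hpred (ri i) hA.1
        have harc_u := harcs u hu
        rw [hfu] at harc_u
        rcases u with _ | (i' | j₁)
        · exact harc_u
        · exact harc_u.elim
        · exact absurd ⟨j₁, hu, hfu⟩ hB
    · by_cases hB : ∃ j₁, cj j₁ ∈ S ∧ f (cj j₁) = ri i
      · rw [if_neg hA, if_pos hB]
        refine Or.inr (Or.inr ⟨by ring, ?_⟩)
        obtain ⟨j₁, hmem, hf⟩ := hB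
        have hmem_ri : ri i ∈ S := by rw [← hf]; exact hmaps _ hmem
        have harc_i := harcs (ri i) hmem_ri
        rcases hfv : f (ri i) with _ | (i₂ | j₂)
        · rw [hfv] at harc_i; exact harc_i
        · rw [hfv] at harc_i; exact harc_i.elim
        · exact absurd ⟨hmem_ri, j₂, hfv⟩ hA
      · rw [if_neg hA, if_neg hB]; exact Or.inl (by ring)
  -- column trichotomy
  have hcol : ∀ j, Cs χ j = 0 ∨ (Cs χ j = 1 ∧ 0 < Cs y j) ∨ (Cs χ j = -1 ∧ Cs y j < 0) := by
    intro j
    rw [hcolsum j]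
    by_cases hA : ∃ i₁, ri i₁ ∈ S ∧ f (ri i₁) = cj j
    · by_cases hB : cj j ∈ S ∧ (∃ i₁, f (cj j) = ri i₁)
      · rw [if_pos hA, if_pos hB]; exact Or.inl (by ring)
      · rw [if_pos hA, if_neg hB]
        refine Or.inr (Or.inl ⟨by ring, ?_⟩)
        obtain ⟨i₁, hmem, hf⟩ := hA
        have hmem_cj : cj j ∈ S := by rw [← hf]; exact hmaps _ hmem
        have harc_j := harcs (cj j) hmem_cj
        rcases hfv : f (cj j) with _ | (i₂ | j₂)
        · rw [hfv] at harc_j; exact harc_j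
        · exact absurd ⟨hmem_cj, i₂, hfv⟩ hB
        · rw [hfv] at harc_j; exact harc_j.elim
    · by_cases hB : cj j ∈ S ∧ (∃ i₁, f (cj j) = ri i₁)
      · rw [if_neg hA, if_pos hB]
        refine Or.inr (Or.inr ⟨by ring, ?_⟩)
        obtain ⟨u, hu, hfu⟩ := hpred (cj j) hB.1
        have harc_u := harcs u hu
        rw [hfu] at harc_u
        rcases u with _ | (i₁ | j')
        · exact harc_u
        · exact absurd ⟨i₁, hu, hfu⟩ hA
        · exact harc_u.elim
      · rw [if_neg hA, if_neg hB]; exact Or.inl (by ring)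
  -- χ ≠ 0 : find a real edge in the cycle
  have hreal : ∃ v ∈ S, v ≠ none ∧ f v ≠ none := by
    by_cases hn : none ∈ S
    · refine ⟨f none, hmaps _ hn, ?_, ?_⟩
      · intro h
        have := harcs none hn
        rw [h] at this
        exact this.elim
      · intro h
        -- f (f none) = none would mean a 2-cycle none → v → none
        have a1 := harcs none hn
        have a2 := harcs (f none) (hmaps _ hn)
        rw [h] at a2
        rcases hfv : f none with _ | (i | j)
        · rw [hfv] at a1; exact a1.elim
        · rw [hfv] at a1 a2
          have b1 : 0 < Rs y i := a1
          have b2 : Rs y i < 0 := a2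
          linarith
        · rw [hfv] at a1 a2
          have b1 : Cs y j < 0 := a1
          have b2 : 0 < Cs y j := a2
          linarith
    · obtain ⟨v, hv⟩ := hne
      refine ⟨v, hv, ?_, ?_⟩
      · intro h; rw [h] at hv; exact hn hv
      · intro h; rw [← h] at hn; exact hn (hmaps _ hv)
  have hnonzero : ∃ i j, χ i j ≠ 0 := by
    obtain ⟨v, hv, hv1, hv2⟩ := hreal
    have harc_v := harcs v hv
    rcases v with _ | (i | j)
    · exact absurd rfl hv1
    · rcases hfv : f (some (Sum.inl i)) with _ | (i' | j)
      · exact absurd hfv hv2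
      · rw [hfv] at harc_v; exact harc_v.elim
      · refine ⟨i, j, ?_⟩
        have h1 : ri i ∈ S ∧ f (ri i) = cj j := ⟨hv, hfv⟩
        have h2 : ¬(cj j ∈ S ∧ f (cj j) = ri i) := fun h2 => hboth i j ⟨h1, h2⟩
        simp [hχ, h1, h2]
    · rcases hfv : f (some (Sum.inr j)) with _ | (i | j')
      · exact absurd hfv hv2
      · refine ⟨i, j, ?_⟩
        have h2 : cj j ∈ S ∧ f (cj j) = ri i := ⟨hv, hfv⟩
        have h1 : ¬(ri i ∈ S ∧ f (ri i) = cj j) := fun h1 => hboth i j ⟨h1, h2⟩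
        simp [hχ, h1, h2]
      · rw [hfv] at harc_v; exact harc_v.elim
  exact ⟨χ, ⟨hentry, hrow, hcol⟩, hnonzero⟩



lemma step_scalar {u v lam : ℝ} (hv : v = 0 ∨ (v = 1 ∧ 0 < u) ∨ (v = -1 ∧ u < 0))
    (hlam : 0 < lam) (hle : v ≠ 0 → lam ≤ |u|) :
    |u - lam * v| = |u| - lam * |v| ∧
    (u - lam * v = 0 ∨ (0 < u - lam * v ∧ 0 < u) ∨ (u - lam * v < 0 ∧ u < 0)) := by
  rcases hv with h | ⟨h1, h2⟩ | ⟨h1, h2⟩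
  · subst h; constructor
    · simp
    · rcases lt_trichotomy u 0 with h | h | h
      · right; right; exact ⟨by simpa using h, h⟩
      · left; simp [h]
      · right; left; exact ⟨by simpa using h, h⟩
  · subst h1
    have hl : lam ≤ u := by
      have := hle (by norm_num)
      rwa [abs_of_pos h2] at this
    constructor
    · rw [abs_of_pos h2, abs_of_nonneg (by linarith : (0:ℝ) ≤ u - lam * 1), abs_one]
    · rcases eq_or_lt_of_le hl with h | h
      · left; rw [h]; ring
      · right; left; constructor <;> [linarith; linarith]
  · subst h1
    have hl : lam ≤ -u := by
      have := hle (by norm_num)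
      rwa [abs_of_neg h2] at this
    constructor
    · rw [abs_of_neg h2, abs_of_nonpos (by linarith : u - lam * (-1) ≤ 0)]
      rw [abs_neg, abs_one]; ring
    · rcases eq_or_lt_of_le hl with h | h
      · left; rw [h]; ring
      · right; right; constructor <;> linarith
  
-- sign transfer
lemma conf_trans {y y' χ : Fin d → Fin n → ℝ}
    (he : ∀ i j, y' i j = 0 ∨ (0 < y' i j ∧ 0 < y i j) ∨ (y' i j < 0 ∧ y i j < 0))
    (hR : ∀ i, Rs y' i = 0 ∨ (0 < Rs y' i ∧ 0 < Rs y i) ∨ (Rs y' i < 0 ∧ Rs y i < 0))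
    (hC : ∀ j, Cs y' j = 0 ∨ (0 < Cs y' j ∧ 0 < Cs y j) ∨ (Cs y' j < 0 ∧ Cs y j < 0))
    (h : Conf y' χ) : Conf y χ := by
  obtain ⟨h1, h2, h3⟩ := h
  refine ⟨fun i j => ?_, fun i => ?_, fun j => ?_⟩
  · rcases h1 i j with h | ⟨ha, hb⟩ | ⟨ha, hb⟩
    · exact Or.inl h
    · rcases he i j with h | ⟨hc, hd⟩ | ⟨hc, hd⟩ <;> [linarith; exact Or.inr (Or.inl ⟨ha, hd⟩); linarith]
    · rcases he i j with h | ⟨hc, hd⟩ | ⟨hc, hd⟩ <;> [linarith; linarith; exact Or.inr (Or.inr ⟨ha, hd⟩)]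
  · rcases h2 i with h | ⟨ha, hb⟩ | ⟨ha, hb⟩
    · exact Or.inl h
    · rcases hR i with h | ⟨hc, hd⟩ | ⟨hc, hd⟩ <;> [linarith; exact Or.inr (Or.inl ⟨ha, hd⟩); linarith]
    · rcases hR i with h | ⟨hc, hd⟩ | ⟨hc, hd⟩ <;> [linarith; linarith; exact Or.inr (Or.inr ⟨ha, hd⟩)]
  · rcases h3 j with h | ⟨ha, hb⟩ | ⟨ha, hb⟩
    · exact Or.inl h
    · rcases hC j with h | ⟨hc, hd⟩ | ⟨hc, hd⟩ <;> [linarith; exact Or.inr (Or.inl ⟨ha, hd⟩); linarith]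
    · rcases hC j with h | ⟨hc, hd⟩ | ⟨hc, hd⟩ <;> [linarith; linarith; exact Or.inr (Or.inr ⟨ha, hd⟩)]

open Classical in
noncomputable def μm (y : Fin d → Fin n → ℝ) : ℕ :=
  (univ.filter fun e : Fin d × Fin n => y e.1 e.2 ≠ 0).card * (d + n + 1) +
  (univ.filter fun i => Rs y i ≠ 0).card + (univ.filter fun j => Cs y j ≠ 0).card

lemma decomp (y : Fin d → Fin n → ℝ) :
    ∃ L : List (ℝ × (Fin d → Fin n → ℝ)),
      (∀ p ∈ L, 0 < p.1 ∧ (∃ i j, p.2 i j ≠ 0) ∧ Conf y p.2) ∧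
      (∀ i j, y i j = (L.map (fun p => p.1 * p.2 i j)).sum) ∧
      (∀ i j, |y i j| = (L.map (fun p => p.1 * |p.2 i j|)).sum) ∧
      (∀ i, |Rs y i| = (L.map (fun p => p.1 * |Rs p.2 i|)).sum) ∧
      (∀ j, |Cs y j| = (L.map (fun p => p.1 * |Cs p.2 j|)).sum) := by
  classical
  suffices H : ∀ N (w : Fin d → Fin n → ℝ), μm w ≤ N →
      ∃ L : List (ℝ × (Fin d → Fin n → ℝ)),
        (∀ p ∈ L, 0 < p.1 ∧ (∃ i j, p.2 i j ≠ 0) ∧ Conf w p.2) ∧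
        (∀ i j, w i j = (L.map (fun p => p.1 * p.2 i j)).sum) ∧
        (∀ i j, |w i j| = (L.map (fun p => p.1 * |p.2 i j|)).sum) ∧
        (∀ i, |Rs w i| = (L.map (fun p => p.1 * |Rs p.2 i|)).sum) ∧
        (∀ j, |Cs w j| = (L.map (fun p => p.1 * |Cs p.2 j|)).sum) by
    exact H (μm y) y le_rfl
  intro N
  induction N using Nat.strong_induction_on with
  | _ N ih =>
    intro y hN
    by_cases hy : ∃ i j, y i j ≠ 0
    · obtain ⟨χ, hconf, hχne⟩ := extract y hy
      obtain ⟨hce, hcr, hcc⟩ := hconf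
      -- the step size
      set T : Finset ℝ :=
        ((univ.filter fun e : Fin d × Fin n => χ e.1 e.2 ≠ 0).image fun e => |y e.1 e.2|) ∪
        ((univ.filter fun i => Rs χ i ≠ 0).image fun i => |Rs y i|) ∪
        ((univ.filter fun j => Cs χ j ≠ 0).image fun j => |Cs y j|) with hT
      have hTne : T.Nonempty := by
        obtain ⟨i, j, hij⟩ := hχne
        exact ⟨|y i j|, by
          simp only [hT, Finset.mem_union]
          exact Or.inl (Or.inl (Finset.mem_image.2 ⟨(i, j), Finset.mem_filter.2 ⟨Finset.mem_univ _, hij⟩, rfl⟩))⟩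
      set lam := T.min' hTne with hlamdef
      have hlam_mem := T.min'_mem hTne
      have hlam_pos : 0 < lam := by
        rw [hlamdef]
        rcases Finset.mem_union.1 (T.min'_mem hTne) with h | h
        · rcases Finset.mem_union.1 h with h' | h'
          · obtain ⟨e, he, heq⟩ := Finset.mem_image.1 h'
            have := (Finset.mem_filter.1 he).2
            rcases hce e.1 e.2 with h0 | ⟨_, h0⟩ | ⟨_, h0⟩
            · exact absurd h0 this
            · rw [← heq]; exact abs_pos.2 (ne_of_gt h0)
            · rw [← heq]; exact abs_pos.2 (ne_of_lt h0)
          · obtain ⟨i, hi, heq⟩ := Finset.mem_image.1 h'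
            have := (Finset.mem_filter.1 hi).2
            rcases hcr i with h0 | ⟨_, h0⟩ | ⟨_, h0⟩
            · exact absurd h0 this
            · rw [← heq]; exact abs_pos.2 (ne_of_gt h0)
            · rw [← heq]; exact abs_pos.2 (ne_of_lt h0)
        · obtain ⟨j, hj, heq⟩ := Finset.mem_image.1 h
          have := (Finset.mem_filter.1 hj).2
          rcases hcc j with h0 | ⟨_, h0⟩ | ⟨_, h0⟩
          · exact absurd h0 this
          · rw [← heq]; exact abs_pos.2 (ne_of_gt h0)
          · rw [← heq]; exact abs_pos.2 (ne_of_lt h0)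
      have hle_e : ∀ i j, χ i j ≠ 0 → lam ≤ |y i j| := by
        intro i j hij
        apply T.min'_le
        simp only [hT, Finset.mem_union]
        exact Or.inl (Or.inl (Finset.mem_image.2 ⟨(i, j), Finset.mem_filter.2 ⟨Finset.mem_univ _, hij⟩, rfl⟩))
      have hle_r : ∀ i, Rs χ i ≠ 0 → lam ≤ |Rs y i| := by
        intro i hi
        apply T.min'_le
        simp only [hT, Finset.mem_union]
        exact Or.inl (Or.inr (Finset.mem_image.2 ⟨i, Finset.mem_filter.2 ⟨Finset.mem_univ _, hi⟩, rfl⟩))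
      have hle_c : ∀ j, Cs χ j ≠ 0 → lam ≤ |Cs y j| := by
        intro j hj
        apply T.min'_le
        simp only [hT, Finset.mem_union]
        exact Or.inr (Finset.mem_image.2 ⟨j, Finset.mem_filter.2 ⟨Finset.mem_univ _, hj⟩, rfl⟩)
      set y' : Fin d → Fin n → ℝ := fun i j => y i j - lam * χ i j with hy'
      have hRs' : ∀ i, Rs y' i = Rs y i - lam * Rs χ i := by
        intro i
        simp only [Rs, hy', Finset.sum_sub_distrib, Finset.mul_sum]
      have hCs' : ∀ j, Cs y' j = Cs y j - lam * Cs χ j := by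
        intro j
        simp only [Cs, hy', Finset.sum_sub_distrib, Finset.mul_sum]
      -- scalar facts
      have S_e : ∀ i j, |y' i j| = |y i j| - lam * |χ i j| ∧
          (y' i j = 0 ∨ (0 < y' i j ∧ 0 < y i j) ∨ (y' i j < 0 ∧ y i j < 0)) :=
        fun i j => step_scalar (hce i j) hlam_pos (hle_e i j)
      have S_r : ∀ i, |Rs y' i| = |Rs y i| - lam * |Rs χ i| ∧
          (Rs y' i = 0 ∨ (0 < Rs y' i ∧ 0 < Rs y i) ∨ (Rs y' i < 0 ∧ Rs y i < 0)) := by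
        intro i
        rw [hRs' i]
        exact step_scalar (hcr i) hlam_pos (hle_r i)
      have S_c : ∀ j, |Cs y' j| = |Cs y j| - lam * |Cs χ j| ∧
          (Cs y' j = 0 ∨ (0 < Cs y' j ∧ 0 < Cs y j) ∨ (Cs y' j < 0 ∧ Cs y j < 0)) := by
        intro j
        rw [hCs' j]
        exact step_scalar (hcc j) hlam_pos (hle_c j)
      -- measure decreases
      have hsub_e : (univ.filter fun e : Fin d × Fin n => y' e.1 e.2 ≠ 0) ⊆
          (univ.filter fun e : Fin d × Fin n => y e.1 e.2 ≠ 0) := by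
        intro e he
        rw [Finset.mem_filter] at he ⊢
        refine ⟨Finset.mem_univ _, ?_⟩
        rcases (S_e e.1 e.2).2 with h | ⟨_, h⟩ | ⟨_, h⟩
        · exact absurd h he.2
        · exact ne_of_gt h
        · exact ne_of_lt h
      have hsub_r : (univ.filter fun i => Rs y' i ≠ 0) ⊆ (univ.filter fun i => Rs y i ≠ 0) := by
        intro i hi
        rw [Finset.mem_filter] at hi ⊢
        refine ⟨Finset.mem_univ _, ?_⟩
        rcases (S_r i).2 with h | ⟨_, h⟩ | ⟨_, h⟩
        · exact absurd h hi.2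
        · exact ne_of_gt h
        · exact ne_of_lt h
      have hsub_c : (univ.filter fun j => Cs y' j ≠ 0) ⊆ (univ.filter fun j => Cs y j ≠ 0) := by
        intro j hj
        rw [Finset.mem_filter] at hj ⊢
        refine ⟨Finset.mem_univ _, ?_⟩
        rcases (S_c j).2 with h | ⟨_, h⟩ | ⟨_, h⟩
        · exact absurd h hj.2
        · exact ne_of_gt h
        · exact ne_of_lt h
      have hμ : μm y' < μm y := by
        have hEle := Finset.card_le_card hsub_e
        have hRle := Finset.card_le_card hsub_r
        have hCle := Finset.card_le_card hsub_c
        have hRd : (univ.filter fun i => Rs y' i ≠ 0).card ≤ d := by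
          calc (univ.filter fun i => Rs y' i ≠ 0).card ≤ (univ : Finset (Fin d)).card :=
                Finset.card_le_card (Finset.filter_subset _ _)
            _ = d := by simp
        have hCn : (univ.filter fun j => Cs y' j ≠ 0).card ≤ n := by
          calc (univ.filter fun j => Cs y' j ≠ 0).card ≤ (univ : Finset (Fin n)).card :=
                Finset.card_le_card (Finset.filter_subset _ _)
            _ = n := by simp
        -- one of the three quantities strictly decreases
        rcases Finset.mem_union.1 hlam_mem with h | h
        · rcases Finset.mem_union.1 h with h' | h'
          · -- an entry dies
            obtain ⟨e, he, heq⟩ := Finset.mem_image.1 h'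
            have hχe := (Finset.mem_filter.1 he).2
            have hye : y e.1 e.2 ≠ 0 := by
              rcases hce e.1 e.2 with h0 | ⟨_, h0⟩ | ⟨_, h0⟩
              · exact absurd h0 hχe
              · exact ne_of_gt h0
              · exact ne_of_lt h0
            have hy'e : y' e.1 e.2 = 0 := by
              have habs := (S_e e.1 e.2).1
              have : |χ e.1 e.2| = 1 := by
                rcases hce e.1 e.2 with h0 | ⟨h0, _⟩ | ⟨h0, _⟩
                · exact absurd h0 hχe
                · rw [h0]; exact abs_one
                · rw [h0]; simp
              rw [← hlamdef] at heq
              rw [this, mul_one, heq] at habs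
              exact abs_eq_zero.1 (by rw [habs, sub_self])
            have hss : (univ.filter fun e : Fin d × Fin n => y' e.1 e.2 ≠ 0) ⊂
                (univ.filter fun e : Fin d × Fin n => y e.1 e.2 ≠ 0) := by
              refine Finset.ssubset_iff_of_subset hsub_e |>.2 ?_
              exact ⟨e, Finset.mem_filter.2 ⟨Finset.mem_univ _, hye⟩, by
                simp only [Finset.mem_filter, Finset.mem_univ, true_and, not_not]
                exact hy'e⟩
            have hElt := Finset.card_lt_card hss
            simp only [μm]
            have h1 : (univ.filter fun e : Fin d × Fin n => y' e.1 e.2 ≠ 0).card + 1 ≤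
                (univ.filter fun e : Fin d × Fin n => y e.1 e.2 ≠ 0).card := hElt
            have hmul : ((univ.filter fun e : Fin d × Fin n => y' e.1 e.2 ≠ 0).card + 1) * (d+n+1) ≤
                (univ.filter fun e : Fin d × Fin n => y e.1 e.2 ≠ 0).card * (d+n+1) :=
              Nat.mul_le_mul_right _ h1
            rw [add_one_mul] at hmul
            omega
          · -- a row sum dies
            obtain ⟨i, hi, heq⟩ := Finset.mem_image.1 h'
            have hχi := (Finset.mem_filter.1 hi).2
            have hyi : Rs y i ≠ 0 := by
              rcases hcr i with h0 | ⟨_, h0⟩ | ⟨_, h0⟩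
              · exact absurd h0 hχi
              · exact ne_of_gt h0
              · exact ne_of_lt h0
            have hy'i : Rs y' i = 0 := by
              have habs := (S_r i).1
              have : |Rs χ i| = 1 := by
                rcases hcr i with h0 | ⟨h0, _⟩ | ⟨h0, _⟩
                · exact absurd h0 hχi
                · rw [h0]; exact abs_one
                · rw [h0]; simp
              rw [← hlamdef] at heq
              rw [this, mul_one, heq] at habs
              exact abs_eq_zero.1 (by rw [habs, sub_self])
            have hss : (univ.filter fun i => Rs y' i ≠ 0) ⊂ (univ.filter fun i => Rs y i ≠ 0) := by
              refine Finset.ssubset_iff_of_subset hsub_r |>.2 ?_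
              exact ⟨i, Finset.mem_filter.2 ⟨Finset.mem_univ _, hyi⟩, by
                simp only [Finset.mem_filter, Finset.mem_univ, true_and, not_not]
                exact hy'i⟩
            have hRlt := Finset.card_lt_card hss
            simp only [μm]
            have hmul : (univ.filter fun e : Fin d × Fin n => y' e.1 e.2 ≠ 0).card * (d+n+1) ≤
                (univ.filter fun e : Fin d × Fin n => y e.1 e.2 ≠ 0).card * (d+n+1) :=
              Nat.mul_le_mul_right _ hEle
            omega
        · -- a column sum dies
          obtain ⟨j, hj, heq⟩ := Finset.mem_image.1 h
          have hχj := (Finset.mem_filter.1 hj).2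
          have hyj : Cs y j ≠ 0 := by
            rcases hcc j with h0 | ⟨_, h0⟩ | ⟨_, h0⟩
            · exact absurd h0 hχj
            · exact ne_of_gt h0
            · exact ne_of_lt h0
          have hy'j : Cs y' j = 0 := by
            have habs := (S_c j).1
            have : |Cs χ j| = 1 := by
              rcases hcc j with h0 | ⟨h0, _⟩ | ⟨h0, _⟩
              · exact absurd h0 hχj
              · rw [h0]; exact abs_one
              · rw [h0]; simp
            rw [← hlamdef] at heq
            rw [this, mul_one, heq] at habs
            exact abs_eq_zero.1 (by rw [habs, sub_self])
          have hss : (univ.filter fun j => Cs y' j ≠ 0) ⊂ (univ.filter fun j => Cs y j ≠ 0) := by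
            refine Finset.ssubset_iff_of_subset hsub_c |>.2 ?_
            exact ⟨j, Finset.mem_filter.2 ⟨Finset.mem_univ _, hyj⟩, by
              simp only [Finset.mem_filter, Finset.mem_univ, true_and, not_not]
              exact hy'j⟩
          have hClt := Finset.card_lt_card hss
          simp only [μm]
          have hmul : (univ.filter fun e : Fin d × Fin n => y' e.1 e.2 ≠ 0).card * (d+n+1) ≤
              (univ.filter fun e : Fin d × Fin n => y e.1 e.2 ≠ 0).card * (d+n+1) :=
            Nat.mul_le_mul_right _ hEle
          omega
      -- recurse
      obtain ⟨L', hL'props, hL'sum, hL'abs, hL'row, hL'col⟩ :=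
        ih (μm y') (lt_of_lt_of_le hμ hN) y' le_rfl
      refine ⟨(lam, χ) :: L', ?_, ?_, ?_, ?_, ?_⟩
      · rintro p hp
        rcases List.mem_cons.1 hp with rfl | hp'
        · exact ⟨hlam_pos, hχne, hce, hcr, hcc⟩
        · obtain ⟨h1, h2, h3⟩ := hL'props p hp'
          exact ⟨h1, h2, conf_trans (fun i j => (S_e i j).2) (fun i => (S_r i).2)
            (fun j => (S_c j).2) h3⟩
      · intro i j
        simp only [List.map_cons, List.sum_cons, ← hL'sum i j]
        simp only [hy']; ring
      · intro i j
        simp only [List.map_cons, List.sum_cons, ← hL'abs i j]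
        have := (S_e i j).1
        linarith
      · intro i
        simp only [List.map_cons, List.sum_cons, ← hL'row i]
        have := (S_r i).1
        linarith
      · intro j
        simp only [List.map_cons, List.sum_cons, ← hL'col j]
        have := (S_c j).1
        linarith
    · push_neg at hy
      refine ⟨[], by simp, ?_, ?_, ?_, ?_⟩
      · intro i j; simp [hy i j]
      · intro i j; simp [hy i j]
      · intro i; simp [Rs, hy]
      · intro j; simp [Cs, hy]


def Feas (b : Fin d → ℝ) (z : Fin n → ℝ) (x : Fin d → Fin n → ℝ) : Prop :=
  (∀ i j, 0 ≤ x i j) ∧ (∀ i, ∑ j, x i j ≤ b i) ∧ (∀ j, ∑ i, x i j ≤ z j)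

lemma push (b : Fin d → ℝ) (z₁ z₂ : Fin n → ℝ) (x₁ x₂ : Fin d → Fin n → ℝ)
    (hf₁ : Feas b z₁ x₁) (hf₂ : Feas b z₂ x₂)
    (χ : Fin d → Fin n → ℝ)
    (hconf : Conf (fun i j => x₁ i j - x₂ i j) χ) (hχne : ∃ i j, χ i j ≠ 0)
    (hnobad : ∀ j, ¬((Cs χ j = 1 ∧ ∑ i, x₂ i j = z₂ j) ∨ (Cs χ j = -1 ∧ ∑ i, x₁ i j = z₁ j))) :
    ∃ ε : ℝ, 0 < ε ∧
      Feas b z₂ (fun i j => x₂ i j + ε * χ i j) ∧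
      Feas b z₁ (fun i j => x₁ i j - ε * χ i j) ∧
      (∀ i j, |x₁ i j - (x₂ i j + ε * χ i j)| = |x₁ i j - x₂ i j| - ε * |χ i j|) := by
  classical
  obtain ⟨hce, hcr, hcc⟩ := hconf
  obtain ⟨h₁pos, h₁row, h₁col⟩ := hf₁
  obtain ⟨h₂pos, h₂row, h₂col⟩ := hf₂
  simp only [Rs, Cs] at hcr hcc
  set F : Finset ℝ :=
    (((univ.filter fun e : Fin d × Fin n => χ e.1 e.2 ≠ 0).image
        fun e => |x₁ e.1 e.2 - x₂ e.1 e.2|) ∪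
      ((univ.filter fun i => (∑ j, χ i j) ≠ 0).image fun i => |∑ j, (x₁ i j - x₂ i j)|)) ∪
    (((univ.filter fun j => (∑ i, χ i j) = 1).image fun j => z₂ j - ∑ i, x₂ i j) ∪
      ((univ.filter fun j => (∑ i, χ i j) = -1).image fun j => z₁ j - ∑ i, x₁ i j)) with hF
  have hFne : F.Nonempty := by
    obtain ⟨i, j, hij⟩ := hχne
    exact ⟨|x₁ i j - x₂ i j|, by
      simp only [hF, Finset.mem_union]
      exact Or.inl (Or.inl (Finset.mem_image.2
        ⟨(i, j), Finset.mem_filter.2 ⟨Finset.mem_univ _, hij⟩, rfl⟩))⟩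
  set ε := F.min' hFne with hεdef
  have hεmem := F.min'_mem hFne
  have hεpos : 0 < ε := by
    rw [hεdef]
    have : ∀ t ∈ F, 0 < t := by
      intro t ht
      simp only [hF, Finset.mem_union] at ht
      rcases ht with (h | h) | (h | h)
      · obtain ⟨e, he, rfl⟩ := Finset.mem_image.1 h
        have hne := (Finset.mem_filter.1 he).2
        rcases hce e.1 e.2 with h0 | ⟨_, h0⟩ | ⟨_, h0⟩
        · exact absurd h0 hne
        · exact abs_pos.2 (ne_of_gt h0)
        · exact abs_pos.2 (ne_of_lt h0)
      · obtain ⟨i, hi, rfl⟩ := Finset.mem_image.1 h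
        have hne := (Finset.mem_filter.1 hi).2
        rcases hcr i with h0 | ⟨_, h0⟩ | ⟨_, h0⟩
        · exact absurd h0 hne
        · exact abs_pos.2 (ne_of_gt h0)
        · exact abs_pos.2 (ne_of_lt h0)
      · obtain ⟨j, hj, rfl⟩ := Finset.mem_image.1 h
        have h1 := (Finset.mem_filter.1 hj).2
        have h2 : ¬(∑ i, x₂ i j = z₂ j) := by
          intro hcon
          exact hnobad j (Or.inl ⟨by simpa [Cs] using h1, hcon⟩)
        have h3 := h₂col j
        rcases lt_or_eq_of_le h3 with h | h
        · linarith
        · exact absurd h h2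
      · obtain ⟨j, hj, rfl⟩ := Finset.mem_image.1 h
        have h1 := (Finset.mem_filter.1 hj).2
        have h2 : ¬(∑ i, x₁ i j = z₁ j) := by
          intro hcon
          exact hnobad j (Or.inr ⟨by simpa [Cs] using h1, hcon⟩)
        have h3 := h₁col j
        rcases lt_or_eq_of_le h3 with h | h
        · linarith
        · exact absurd h h2
    exact this _ (F.min'_mem hFne)
  have hle_e : ∀ i j, χ i j ≠ 0 → ε ≤ |x₁ i j - x₂ i j| := by
    intro i j hij
    apply F.min'_le
    simp only [hF, Finset.mem_union]
    exact Or.inl (Or.inl (Finset.mem_image.2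
      ⟨(i, j), Finset.mem_filter.2 ⟨Finset.mem_univ _, hij⟩, rfl⟩))
  have hle_r : ∀ i, (∑ j, χ i j) ≠ 0 → ε ≤ |∑ j, (x₁ i j - x₂ i j)| := by
    intro i hi
    apply F.min'_le
    simp only [hF, Finset.mem_union]
    exact Or.inl (Or.inr (Finset.mem_image.2
      ⟨i, Finset.mem_filter.2 ⟨Finset.mem_univ _, hi⟩, rfl⟩))
  have hle_c1 : ∀ j, (∑ i, χ i j) = 1 → ε ≤ z₂ j - ∑ i, x₂ i j := by
    intro j hj
    apply F.min'_le
    simp only [hF, Finset.mem_union]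
    exact Or.inr (Or.inl (Finset.mem_image.2
      ⟨j, Finset.mem_filter.2 ⟨Finset.mem_univ _, hj⟩, rfl⟩))
  have hle_c2 : ∀ j, (∑ i, χ i j) = -1 → ε ≤ z₁ j - ∑ i, x₁ i j := by
    intro j hj
    apply F.min'_le
    simp only [hF, Finset.mem_union]
    exact Or.inr (Or.inr (Finset.mem_image.2
      ⟨j, Finset.mem_filter.2 ⟨Finset.mem_univ _, hj⟩, rfl⟩))
  refine ⟨ε, hεpos, ⟨?_, ?_, ?_⟩, ⟨?_, ?_, ?_⟩, ?_⟩
  · -- entries of x₂ + εχ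
    intro i j
    show 0 ≤ x₂ i j + ε * χ i j
    rcases hce i j with h0 | ⟨h0, hy⟩ | ⟨h0, hy⟩
    · rw [h0]; simpa using h₂pos i j
    · rw [h0]; have := h₂pos i j; linarith
    · rw [h0]
      have hy' : |x₁ i j - x₂ i j| = x₂ i j - x₁ i j := by
        rw [abs_of_neg hy]; ring
      have := hle_e i j (by rw [h0]; norm_num)
      rw [hy'] at this
      have := h₁pos i j
      linarith
  · -- row sums of x₂ + εχ
    intro i
    show ∑ j, (x₂ i j + ε * χ i j) ≤ b i
    have hsum : ∑ j, (x₂ i j + ε * χ i j) = (∑ j, x₂ i j) + ε * (∑ j, χ i j) := by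
      rw [Finset.sum_add_distrib, Finset.mul_sum]
    rw [hsum]
    rcases hcr i with h0 | ⟨h0, hy⟩ | ⟨h0, hy⟩
    · rw [h0]; simpa using h₂row i
    · rw [h0, mul_one]
      have h1 := hle_r i (by rw [h0]; norm_num)
      have h2 : |∑ j, (x₁ i j - x₂ i j)| = ∑ j, (x₁ i j - x₂ i j) := abs_of_pos hy
      rw [h2, Finset.sum_sub_distrib] at h1
      have := h₁row i
      linarith
    · rw [h0]
      have := h₂row i
      nlinarith
  · -- col sums of x₂ + εχ
    intro j
    show ∑ i, (x₂ i j + ε * χ i j) ≤ z₂ j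
    have hsum : ∑ i, (x₂ i j + ε * χ i j) = (∑ i, x₂ i j) + ε * (∑ i, χ i j) := by
      rw [Finset.sum_add_distrib, Finset.mul_sum]
    rw [hsum]
    rcases hcc j with h0 | ⟨h0, hy⟩ | ⟨h0, hy⟩
    · rw [h0]; simpa using h₂col j
    · rw [h0, mul_one]
      have h1 := hle_c1 j h0
      linarith
    · rw [h0]
      have := h₂col j
      nlinarith
  · -- entries of x₁ - εχ
    intro i j
    show 0 ≤ x₁ i j - ε * χ i j
    rcases hce i j with h0 | ⟨h0, hy⟩ | ⟨h0, hy⟩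
    · rw [h0]; simpa using h₁pos i j
    · rw [h0]
      have hy' : |x₁ i j - x₂ i j| = x₁ i j - x₂ i j := abs_of_pos hy
      have := hle_e i j (by rw [h0]; norm_num)
      rw [hy'] at this
      have := h₂pos i j
      linarith
    · rw [h0]; have := h₁pos i j; linarith
  · -- row sums of x₁ - εχ
    intro i
    show ∑ j, (x₁ i j - ε * χ i j) ≤ b i
    have hsum : ∑ j, (x₁ i j - ε * χ i j) = (∑ j, x₁ i j) - ε * (∑ j, χ i j) := by
      rw [Finset.sum_sub_distrib, Finset.mul_sum]
    rw [hsum]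
    rcases hcr i with h0 | ⟨h0, hy⟩ | ⟨h0, hy⟩
    · rw [h0]; simpa using h₁row i
    · rw [h0]
      have := h₁row i
      nlinarith
    · rw [h0]
      have h1 := hle_r i (by rw [h0]; norm_num)
      have h2 : |∑ j, (x₁ i j - x₂ i j)| = -(∑ j, (x₁ i j - x₂ i j)) := abs_of_neg hy
      rw [h2, Finset.sum_sub_distrib] at h1
      have := h₂row i
      linarith
  · -- col sums of x₁ - εχ
    intro j
    show ∑ i, (x₁ i j - ε * χ i j) ≤ z₁ j
    have hsum : ∑ i, (x₁ i j - ε * χ i j) = (∑ i, x₁ i j) - ε * (∑ i, χ i j) := by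
      rw [Finset.sum_sub_distrib, Finset.mul_sum]
    rw [hsum]
    rcases hcc j with h0 | ⟨h0, hy⟩ | ⟨h0, hy⟩
    · rw [h0]; simpa using h₁col j
    · rw [h0]
      have := h₁col j
      nlinarith
    · rw [h0]
      have h1 := hle_c2 j h0
      linarith
  · -- abs identity
    intro i j
    show |x₁ i j - (x₂ i j + ε * χ i j)| = |x₁ i j - x₂ i j| - ε * |χ i j|
    have heq : x₁ i j - (x₂ i j + ε * χ i j) = (x₁ i j - x₂ i j) - ε * χ i j := by ring
    rw [heq]
    exact (step_scalar (hce i j) hεpos (hle_e i j)).1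


lemma list_sum_comm {α β : Type*} (L : List α) (s : Finset β) (h : α → β → ℝ) :
    (L.map fun p => ∑ j ∈ s, h p j).sum = ∑ j ∈ s, (L.map fun p => h p j).sum := by
  induction L with
  | nil => simp
  | cons p L ih => simp [ih, Finset.sum_add_distrib]


end MLP

end MLPAuxiliary

open MLP

/-- **Lipschitz property with constant 1 for the matching LP**: for the LP
`P[z, b] : max Σ_{ij} x_ij r_ij a_ij s.t. Σ_j x_ij ≤ b_i, Σ_i x_ij ≤ z_j, x ≥ 0`
with nonnegative rewards `r`, binary adjacency `a` and budgets `b ≥ 0`, any optimal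
solution `x¹` of `P[z¹, b]` has a companion optimal solution `x²` of `P[z², b]` with
`‖x¹ − x²‖_∞ ≤ ‖z¹ − z²‖₁`. -/
theorem matching_lp_lipschitz_constant_one
    (d n : ℕ) (r : Fin d → Fin n → ℝ) (hr : ∀ i j, 0 ≤ r i j)
    (a : Fin d → Fin n → ℝ) (ha : ∀ i j, a i j = 0 ∨ a i j = 1)
    (b : Fin d → ℝ) (hb : ∀ i, 0 ≤ b i)
    (z₁ z₂ : Fin n → ℝ) (hz₁ : ∀ j, 0 ≤ z₁ j) (hz₂ : ∀ j, 0 ≤ z₂ j)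
    (x₁ : Fin d → Fin n → ℝ)
    -- x₁ is an optimal solution of P[z₁, b]
    (hfeas₁ : (∀ i j, 0 ≤ x₁ i j) ∧ (∀ i, ∑ j, x₁ i j ≤ b i) ∧ (∀ j, ∑ i, x₁ i j ≤ z₁ j))
    (hopt₁ : ∀ x : Fin d → Fin n → ℝ,
      (∀ i j, 0 ≤ x i j) → (∀ i, ∑ j, x i j ≤ b i) → (∀ j, ∑ i, x i j ≤ z₁ j) →
      ∑ i, ∑ j, x i j * r i j * a i j ≤ ∑ i, ∑ j, x₁ i j * r i j * a i j) :
    -- then there is an optimal solution x₂ of P[z₂, b] with ‖x₁ − x₂‖_∞ ≤ ‖z₁ − z₂‖₁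
    ∃ x₂ : Fin d → Fin n → ℝ,
      ((∀ i j, 0 ≤ x₂ i j) ∧ (∀ i, ∑ j, x₂ i j ≤ b i) ∧ (∀ j, ∑ i, x₂ i j ≤ z₂ j)) ∧
      (∀ x : Fin d → Fin n → ℝ,
        (∀ i j, 0 ≤ x i j) → (∀ i, ∑ j, x i j ≤ b i) → (∀ j, ∑ i, x i j ≤ z₂ j) →
        ∑ i, ∑ j, x i j * r i j * a i j ≤ ∑ i, ∑ j, x₂ i j * r i j * a i j) ∧
      (∀ i j, |x₁ i j - x₂ i j| ≤ ∑ j', |z₁ j' - z₂ j'|) := by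
  classical
  obtain ⟨h₁pos, h₁row, h₁col⟩ := hfeas₁
  set f : (Fin d → Fin n → ℝ) → ℝ := fun x => ∑ i, ∑ j, x i j * r i j * a i j with hfdef
  set K : Set (Fin d → Fin n → ℝ) := {x | Feas b z₂ x} with hK
  have heval : ∀ (i : Fin d) (j : Fin n),
      Continuous fun x : Fin d → Fin n → ℝ => x i j :=
    fun i j => (continuous_apply j).comp (continuous_apply i)
  have hfc : Continuous f := by
    apply continuous_finset_sum
    intro i _
    apply continuous_finset_sum
    intro j _
    exact ((heval i j).mul continuous_const).mul continuous_const
  have hKclosed : IsClosed K := by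
    have h1 : K = (⋂ i, ⋂ j, {x : Fin d → Fin n → ℝ | 0 ≤ x i j}) ∩
        ((⋂ i, {x : Fin d → Fin n → ℝ | ∑ j, x i j ≤ b i}) ∩
         (⋂ j, {x : Fin d → Fin n → ℝ | ∑ i, x i j ≤ z₂ j})) := by
      ext x
      simp only [hK, Set.mem_setOf_eq, Set.mem_inter_iff, Set.mem_iInter, Feas]
    rw [h1]
    refine IsClosed.inter ?_ (IsClosed.inter ?_ ?_)
    · exact isClosed_iInter fun i => isClosed_iInter fun j =>
        isClosed_le continuous_const (heval i j)
    · exact isClosed_iInter fun i =>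
        isClosed_le (continuous_finset_sum _ fun j _ => heval i j) continuous_const
    · exact isClosed_iInter fun j =>
        isClosed_le (continuous_finset_sum _ fun i _ => heval i j) continuous_const
  have hKbdd : Bornology.IsBounded K := by
    have hC : (0:ℝ) ≤ ∑ i, b i := Finset.sum_nonneg fun i _ => hb i
    apply Bornology.IsBounded.subset (Metric.isBounded_closedBall
      (x := (0 : Fin d → Fin n → ℝ)) (r := ∑ i, b i))
    intro x hx
    obtain ⟨hxpos, hxrow, _⟩ := hx
    rw [Metric.mem_closedBall, dist_zero_right]
    rw [pi_norm_le_iff_of_nonneg hC]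
    intro i
    rw [pi_norm_le_iff_of_nonneg hC]
    intro j
    rw [Real.norm_eq_abs, abs_le]
    constructor
    · linarith [hxpos i j]
    · calc x i j ≤ ∑ j', x i j' :=
            Finset.single_le_sum (f := fun j' => x i j') (fun j' _ => hxpos i j') (mem_univ j)
        _ ≤ b i := hxrow i
        _ ≤ ∑ i', b i' := Finset.single_le_sum (f := b) (fun i' _ => hb i') (mem_univ i)
  have hKcpt : IsCompact K := Metric.isCompact_of_isClosed_isBounded hKclosed hKbdd
  have hK0 : (0 : Fin d → Fin n → ℝ) ∈ K := by
    refine ⟨fun i j => le_refl 0, fun i => ?_, fun j => ?_⟩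
    · simpa using hb i
    · simpa using hz₂ j
  obtain ⟨xs, hxsK, hxsmax⟩ := hKcpt.exists_isMaxOn ⟨0, hK0⟩ hfc.continuousOn
  set S : Set (Fin d → Fin n → ℝ) := {x | x ∈ K ∧ f xs ≤ f x} with hS
  have hScpt : IsCompact S := hKcpt.inter_right (isClosed_le continuous_const hfc)
  have hSne : S.Nonempty := ⟨xs, hxsK, le_refl _⟩
  set g : (Fin d → Fin n → ℝ) → ℝ := fun x => ∑ i, ∑ j, |x₁ i j - x i j| with hg
  have hgc : Continuous g := by
    apply continuous_finset_sum
    intro i _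
    apply continuous_finset_sum
    intro j _
    exact (continuous_const.sub (heval i j)).abs
  obtain ⟨x₂, hx₂S, hx₂min⟩ := hScpt.exists_isMinOn hSne hgc.continuousOn
  obtain ⟨hx₂K, hx₂val⟩ := hx₂S
  have hfeas₂ : Feas b z₂ x₂ := hx₂K
  obtain ⟨h₂pos, h₂row, h₂col⟩ := hfeas₂
  have hopt₂ : ∀ x, Feas b z₂ x → f x ≤ f x₂ :=
    fun x hx => le_trans (isMaxOn_iff.mp hxsmax x hx) hx₂val
  -- the difference and its decomposition
  set y : Fin d → Fin n → ℝ := fun i j => x₁ i j - x₂ i j with hy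
  obtain ⟨L, hLp, hLsum, hLabs, hLrow, hLcol⟩ := decomp y
  -- every piece of the decomposition must have a "bad column" endpoint
  have hbad : ∀ p ∈ L, ∃ j, ((Cs p.2 j = 1 ∧ ∑ i, x₂ i j = z₂ j) ∨
      (Cs p.2 j = -1 ∧ ∑ i, x₁ i j = z₁ j)) := by
    intro p hp
    by_contra hno
    push_neg at hno
    obtain ⟨hl, hne, hconf⟩ := hLp p hp
    obtain ⟨ε, hε, hfeas2', hfeas1', habs⟩ := push b z₁ z₂ x₁ x₂
      ⟨h₁pos, h₁row, h₁col⟩ ⟨h₂pos, h₂row, h₂col⟩ p.2 hconf hne (by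
        rintro j (⟨ha1, ha2⟩ | ⟨ha1, ha2⟩)
        · exact (hno j).1 ha1 ha2
        · exact (hno j).2 ha1 ha2)
    set Φ : ℝ := ∑ i, ∑ j, p.2 i j * r i j * a i j with hΦ
    have hf2 : f (fun i j => x₂ i j + ε * p.2 i j) = f x₂ + ε * Φ := by
      show (∑ i, ∑ j, (x₂ i j + ε * p.2 i j) * r i j * a i j) = _
      have h1 : ∀ i j, (x₂ i j + ε * p.2 i j) * r i j * a i j =
          x₂ i j * r i j * a i j + ε * (p.2 i j * r i j * a i j) := by intros; ring
      calc (∑ i, ∑ j, (x₂ i j + ε * p.2 i j) * r i j * a i j)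
          = ∑ i, ∑ j, (x₂ i j * r i j * a i j + ε * (p.2 i j * r i j * a i j)) := by
            exact Finset.sum_congr rfl fun i _ => Finset.sum_congr rfl fun j _ => h1 i j
        _ = (∑ i, ∑ j, x₂ i j * r i j * a i j) + ε * ∑ i, ∑ j, p.2 i j * r i j * a i j := by
            simp only [Finset.sum_add_distrib, Finset.mul_sum]
        _ = f x₂ + ε * Φ := rfl
    have hf1 : f (fun i j => x₁ i j - ε * p.2 i j) = f x₁ - ε * Φ := by
      show (∑ i, ∑ j, (x₁ i j - ε * p.2 i j) * r i j * a i j) = _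
      have h1 : ∀ i j, (x₁ i j - ε * p.2 i j) * r i j * a i j =
          x₁ i j * r i j * a i j - ε * (p.2 i j * r i j * a i j) := by intros; ring
      calc (∑ i, ∑ j, (x₁ i j - ε * p.2 i j) * r i j * a i j)
          = ∑ i, ∑ j, (x₁ i j * r i j * a i j - ε * (p.2 i j * r i j * a i j)) := by
            exact Finset.sum_congr rfl fun i _ => Finset.sum_congr rfl fun j _ => h1 i j
        _ = (∑ i, ∑ j, x₁ i j * r i j * a i j) - ε * ∑ i, ∑ j, p.2 i j * r i j * a i j := by
            simp only [Finset.sum_sub_distrib, Finset.mul_sum]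
        _ = f x₁ - ε * Φ := rfl
    have hΦle : Φ ≤ 0 := by
      have h := hopt₂ _ hfeas2'
      rw [hf2] at h
      nlinarith
    have hΦge : 0 ≤ Φ := by
      obtain ⟨ha1, ha2, ha3⟩ := hfeas1'
      have h : f (fun i j => x₁ i j - ε * p.2 i j) ≤ f x₁ := hopt₁ _ ha1 ha2 ha3
      rw [hf1] at h
      nlinarith
    have hΦ0 : Φ = 0 := le_antisymm hΦle hΦge
    have hmemS : (fun i j => x₂ i j + ε * p.2 i j) ∈ S := by
      refine ⟨hfeas2', ?_⟩
      show f xs ≤ f (fun i j => x₂ i j + ε * p.2 i j)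
      rw [hf2, hΦ0, mul_zero, add_zero]
      exact hx₂val
    have hgless : g (fun i j => x₂ i j + ε * p.2 i j) < g x₂ := by
      have h1 : g (fun i j => x₂ i j + ε * p.2 i j) =
          (∑ i, ∑ j, |x₁ i j - x₂ i j|) - ε * ∑ i, ∑ j, |p.2 i j| := by
        show (∑ i, ∑ j, |x₁ i j - (x₂ i j + ε * p.2 i j)|) = _
        calc (∑ i, ∑ j, |x₁ i j - (x₂ i j + ε * p.2 i j)|)
            = ∑ i, ∑ j, (|x₁ i j - x₂ i j| - ε * |p.2 i j|) := by
              exact Finset.sum_congr rfl fun i _ => Finset.sum_congr rfl fun j _ => habs i j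
          _ = (∑ i, ∑ j, |x₁ i j - x₂ i j|) - ε * ∑ i, ∑ j, |p.2 i j| := by
              simp only [Finset.sum_sub_distrib, Finset.mul_sum]
      have h2 : 0 < ∑ i, ∑ j, |p.2 i j| := by
        obtain ⟨i0, j0, hij⟩ := hne
        apply Finset.sum_pos'
        · intro i _
          exact Finset.sum_nonneg fun j _ => abs_nonneg _
        · refine ⟨i0, mem_univ _, ?_⟩
          apply Finset.sum_pos'
          · intro j _; exact abs_nonneg _
          · exact ⟨j0, mem_univ _, abs_pos.2 hij⟩
      have h3 : g x₂ = ∑ i, ∑ j, |x₁ i j - x₂ i j| := rfl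
      rw [h1, h3]
      nlinarith
    have := isMinOn_iff.mp hx₂min _ hmemS
    linarith
  -- bad columns, counting
  set Bad : Finset (Fin n) := univ.filter (fun j =>
    ((∑ i, x₂ i j = z₂ j) ∧ 0 < Cs y j) ∨ ((∑ i, x₁ i j = z₁ j) ∧ Cs y j < 0)) with hBadDef
  have hjmem : ∀ p ∈ L, ∃ j ∈ Bad, |Cs p.2 j| = 1 := by
    intro p hp
    obtain ⟨j, hj⟩ := hbad p hp
    obtain ⟨hl, hne, hconf⟩ := hLp p hp
    rcases hj with ⟨h1, h2⟩ | ⟨h1, h2⟩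
    · have hsign : 0 < Cs y j := by
        rcases hconf.2.2 j with h0 | ⟨_, h0⟩ | ⟨h0, _⟩
        · rw [h1] at h0; norm_num at h0
        · exact h0
        · rw [h1] at h0; norm_num at h0
      exact ⟨j, Finset.mem_filter.2 ⟨mem_univ _, Or.inl ⟨h2, hsign⟩⟩, by rw [h1]; exact abs_one⟩
    · have hsign : Cs y j < 0 := by
        rcases hconf.2.2 j with h0 | ⟨h0, _⟩ | ⟨_, h0⟩
        · rw [h1] at h0; norm_num at h0
        · rw [h1] at h0; norm_num at h0
        · exact h0
      exact ⟨j, Finset.mem_filter.2 ⟨mem_univ _, Or.inr ⟨h2, hsign⟩⟩, by rw [h1]; simp⟩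
  have hlam_bound : (L.map fun p => p.1).sum ≤ ∑ j ∈ Bad, |Cs y j| := by
    calc (L.map fun p => p.1).sum ≤ (L.map fun p => ∑ j ∈ Bad, p.1 * |Cs p.2 j|).sum := by
          apply List.sum_le_sum
          intro p hp
          obtain ⟨j, hjB, hj1⟩ := hjmem p hp
          obtain ⟨hl, _, _⟩ := hLp p hp
          calc p.1 = p.1 * |Cs p.2 j| := by rw [hj1, mul_one]
            _ ≤ ∑ j' ∈ Bad, p.1 * |Cs p.2 j'| :=
              Finset.single_le_sum (f := fun j' => p.1 * |Cs p.2 j'|)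
                (fun j' _ => mul_nonneg (le_of_lt hl) (abs_nonneg _)) hjB
      _ = ∑ j ∈ Bad, (L.map fun p => p.1 * |Cs p.2 j|).sum := list_sum_comm L Bad _
      _ = ∑ j ∈ Bad, |Cs y j| := Finset.sum_congr rfl fun j _ => (hLcol j).symm
  have hBadle : ∀ j ∈ Bad, |Cs y j| ≤ |z₁ j - z₂ j| := by
    intro j hj
    have hCsy : Cs y j = (∑ i, x₁ i j) - ∑ i, x₂ i j := by
      simp only [Cs, hy, Finset.sum_sub_distrib]
    rcases (Finset.mem_filter.1 hj).2 with ⟨h1, h2⟩ | ⟨h1, h2⟩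
    · rw [abs_of_pos h2, hCsy, h1]
      have := h₁col j
      have h3 : (∑ i, x₁ i j) - z₂ j ≤ z₁ j - z₂ j := by linarith
      exact le_trans h3 (le_abs_self _)
    · rw [abs_of_neg h2, hCsy, h1]
      have := h₂col j
      have h3 : -(z₁ j - ∑ i, x₂ i j) ≤ z₂ j - z₁ j := by linarith
      calc -(z₁ j - ∑ i, x₂ i j) ≤ z₂ j - z₁ j := h3
        _ ≤ |z₁ j - z₂ j| := by rw [abs_sub_comm]; exact le_abs_self _
  refine ⟨x₂, ⟨h₂pos, h₂row, h₂col⟩, ?_, ?_⟩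
  · intro x hx1 hx2 hx3
    exact hopt₂ x ⟨hx1, hx2, hx3⟩
  · intro i j
    have habs1 : |x₁ i j - x₂ i j| = (L.map (fun p => p.1 * |p.2 i j|)).sum := hLabs i j
    have habs2 : (L.map (fun p => p.1 * |p.2 i j|)).sum ≤ (L.map fun p => p.1).sum := by
      apply List.sum_le_sum
      intro p hp
      obtain ⟨hl, _, hconf⟩ := hLp p hp
      have hle1 : |p.2 i j| ≤ 1 := by
        rcases hconf.1 i j with h0 | ⟨h0, _⟩ | ⟨h0, _⟩ <;> rw [h0] <;> simp
      nlinarith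
    have hsub : ∑ j' ∈ Bad, |z₁ j' - z₂ j'| ≤ ∑ j', |z₁ j' - z₂ j'| :=
      Finset.sum_le_sum_of_subset_of_nonneg (Finset.subset_univ _)
        (fun j' _ _ => abs_nonneg _)
    calc |x₁ i j - x₂ i j| = (L.map (fun p => p.1 * |p.2 i j|)).sum := habs1
      _ ≤ (L.map fun p => p.1).sum := habs2
      _ ≤ ∑ j' ∈ Bad, |Cs y j'| := hlam_bound
      _ ≤ ∑ j' ∈ Bad, |z₁ j' - z₂ j'| := Finset.sum_le_sum hBadle
      _ ≤ ∑ j', |z₁ j' - z₂ j'| := hsub
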